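/- Define v(τ) := inf{X₀₀² + (X₁₁ + 2·X₂₀ − 1)² : X a real symmetric positive semidefinite 3×3 matrix with −2·X₂₀ ≤ τ}. Then v(τ) = 0 for every τ ≥ −1; moreover, for every τ with −1 < τ < 0 the infimum is not attained: there is no symmetric PSD 3×3 matrix X with −2·X₂₀ ≤ τ, X₀₀ = 0 and X₁₁ + 2·X₂₀ = 1. -/

import Mathlib

open Matrix

lemma sdp_aux_mem (PSD : Matrix (Fin 3) (Fin 3) ℝ → Prop)
    (hPSD : ∀ X, PSD X ↔ X.IsSymm ∧ ∀ y : Fin 3 → ℝ, 0 ≤ y ⬝ᵥ X.mulVec y)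
    (τ : ℝ) (hτ : -1 ≤ τ) (ε : ℝ) (hε : 0 < ε) :
    ((ε ^ 2 : ℝ) : EReal) ∈ {t : EReal | ∃ X : Matrix (Fin 3) (Fin 3) ℝ,
      PSD X ∧ (-2 * X 2 0 : ℝ) ≤ τ ∧
        t = ((X 0 0 ^ 2 + (X 1 1 + 2 * X 2 0 - 1) ^ 2 : ℝ) : EReal)} := by
  refine ⟨!![ε, 0, 1/2; 0, 0, 0; 1/2, 0, 1/(4*ε)], ?_, ?_, ?_⟩
  · rw [hPSD]
    constructor
    · rw [Matrix.IsSymm]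
      ext i j
      fin_cases i <;> fin_cases j <;> simp [Matrix.vecHead, Matrix.vecTail]
    · intro y
      have key : y ⬝ᵥ (!![ε, 0, 1/2; 0, 0, 0; 1/2, 0, 1/(4*ε)] : Matrix (Fin 3) (Fin 3) ℝ).mulVec y
          = (2 * ε * y 0 + y 2) ^ 2 / (4 * ε) := by
        simp [Matrix.mulVec, dotProduct, Fin.sum_univ_three]
        field_simp
        ring
      rw [key]
      positivity
  · simp; linarith
  · have h : (!![ε, 0, 1/2; 0, 0, 0; 1/2, 0, 1/(4*ε)] : Matrix (Fin 3) (Fin 3) ℝ) 2 0 = 1/2 := rfl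
    rw [h]; norm_num

/-- **SDP with finite duality gap: level-set value function and non-attainment.**
Define `v(τ) = inf {X₀₀² + (X₁₁ + 2·X₂₀ - 1)² : X symmetric PSD 3×3, -2·X₂₀ ≤ τ}`.
Then `v(τ) = 0` for every `τ ≥ -1`; moreover for `-1 < τ < 0` the infimum is not
attained: no symmetric PSD 3×3 matrix satisfies `-2·X₂₀ ≤ τ`, `X₀₀ = 0` and
`X₁₁ + 2·X₂₀ = 1`. -/
theorem sdp_finite_gap_level_set
    (PSD : Matrix (Fin 3) (Fin 3) ℝ → Prop)
    (hPSD : ∀ X, PSD X ↔ X.IsSymm ∧ ∀ y : Fin 3 → ℝ, 0 ≤ y ⬝ᵥ X.mulVec y)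
    (v : ℝ → EReal)
    (hv : ∀ τ : ℝ, v τ = sInf {t : EReal | ∃ X : Matrix (Fin 3) (Fin 3) ℝ,
      PSD X ∧ (-2 * X 2 0 : ℝ) ≤ τ ∧
        t = ((X 0 0 ^ 2 + (X 1 1 + 2 * X 2 0 - 1) ^ 2 : ℝ) : EReal)}) :
    (∀ τ : ℝ, -1 ≤ τ → v τ = 0) ∧
      ∀ τ : ℝ, -1 < τ → τ < 0 →
        ¬ ∃ X : Matrix (Fin 3) (Fin 3) ℝ,
          PSD X ∧ (-2 * X 2 0 : ℝ) ≤ τ ∧ X 0 0 = 0 ∧ X 1 1 + 2 * X 2 0 = 1 := by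
  constructor
  · intro τ hτ
    rw [hv]
    apply le_antisymm
    · apply le_of_forall_gt_imp_ge_of_dense
      intro a ha
      induction a using EReal.rec with
      | bot => exact absurd ha (by simp)
      | top =>
        exact le_trans (sInf_le (sdp_aux_mem PSD hPSD τ hτ 1 one_pos)) le_top
      | coe x =>
        have hx : (0:ℝ) < x := by exact_mod_cast ha
        have := sInf_le (sdp_aux_mem PSD hPSD τ hτ (Real.sqrt x) (Real.sqrt_pos.mpr hx))
        rwa [Real.sq_sqrt hx.le] at this
    · apply le_sInf
      rintro t ⟨X, -, -, rfl⟩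
      exact_mod_cast (by positivity : (0:ℝ) ≤ X 0 0 ^ 2 + (X 1 1 + 2 * X 2 0 - 1) ^ 2)
  · rintro τ hτ1 hτ2 ⟨X, hX, hcon, h00, -⟩
    obtain ⟨hsymm, hquad⟩ := (hPSD X).mp hX
    have h02 : X 0 2 = X 2 0 := (congrFun (congrFun hsymm 0) 2).symm
    have h20pos : 0 < X 2 0 := by linarith
    have := hquad ![-(X 2 2 + 1), 0, 2 * X 2 0]
    simp [Matrix.mulVec, dotProduct, Fin.sum_univ_three, h00, h02] at this
    nlinarith [sq_nonneg (X 2 0), this]
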